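/- For p ∈ (0,1), s > 0, and t < 0, the unique stationary point of f(q₁) = (1-p)·((1-q₁)·2^t + q₁·2^{2t})^{-s} + p·((1-q₁)·2^t + q₁)^{-s} is q₁* = ((1+2^t)/(1-2^t))·(1/(1+2^t) - p̄^{1/(s+1)}/(2^{st/(s+1)}·p^{1/(s+1)} + p̄^{1/(s+1)})), where p̄ = 1-p. That is, f'(q₁*) = 0. -/

import Mathlib

open Real Set

theorem f_deriv_zero_at_stationary (p s t : ℝ) (hp : p ∈ Set.Ioo (0:ℝ) 1)
    (hs : 0 < s) (ht : t < 0) :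
    deriv (fun q₁ => (1 - p) * ((1 - q₁) * (2:ℝ) ^ t + q₁ * (2:ℝ) ^ (2 * t)) ^ (-s)
        + p * ((1 - q₁) * (2:ℝ) ^ t + q₁) ^ (-s))
      (((1 + (2:ℝ) ^ t) / (1 - (2:ℝ) ^ t)) *
        (1 / (1 + (2:ℝ) ^ t) -
          (1 - p) ^ (1 / (s + 1)) /
            ((2:ℝ) ^ (s * t / (s + 1)) * p ^ (1 / (s + 1)) + (1 - p) ^ (1 / (s + 1)))))
      = 0 := by
  obtain ⟨hp0, hp1⟩ := hp
  have hq0 : 0 < 1 - p := by linarith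
  set c : ℝ := (2:ℝ) ^ t with hcdef
  have hc0 : 0 < c := rpow_pos_of_pos two_pos t
  have hc1 : c < 1 := rpow_lt_one_of_one_lt_of_neg one_lt_two ht
  have hs1 : (0:ℝ) < s + 1 := by linarith
  set σ : ℝ := 1 / (s + 1) with hσdef
  set D : ℝ := (2:ℝ) ^ (s * t / (s + 1)) * p ^ σ + (1 - p) ^ σ with hDdef
  have hDp1 : 0 < (2:ℝ) ^ (s * t / (s + 1)) * p ^ σ :=
    mul_pos (rpow_pos_of_pos two_pos _) (rpow_pos_of_pos hp0 _)
  have hDp2 : 0 < (1 - p) ^ σ := rpow_pos_of_pos hq0 _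
  have hD : 0 < D := by positivity
  set qs : ℝ := ((1 + c) / (1 - c)) * (1 / (1 + c) - (1 - p) ^ σ / D) with hqsdef
  have h2t : (2:ℝ) ^ (2 * t) = c * c := by
    rw [two_mul, rpow_add two_pos]
  have h1c : (1:ℝ) - c ≠ 0 := by linarith
  have h1c' : (1:ℝ) + c ≠ 0 := by linarith
  have hDne : D ≠ 0 := hD.ne'
  have hqlin : qs * (1 - c) = 1 - (1 + c) * ((1 - p) ^ σ / D) := by
    rw [hqsdef]
    field_simp
  set K : ℝ := (1 + c) / D with hKdef
  have hK : 0 < K := by positivity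
  have hA : (1 - qs) * c + qs * (c * c) = c * ((1 - p) ^ σ * K) := by
    have h : (1 - qs) * c + qs * (c * c) = c * (1 - qs * (1 - c)) := by ring
    rw [h, hqlin, hKdef]
    ring
  have hDD : (2:ℝ) ^ (s * t / (s + 1)) * p ^ σ = D - (1 - p) ^ σ := by
    rw [hDdef]; ring
  have hB : (1 - qs) * c + qs = (2:ℝ) ^ (s * t / (s + 1)) * p ^ σ * K := by
    have h : (1 - qs) * c + qs = c + qs * (1 - c) := by ring
    rw [h, hqlin, hKdef, hDD]
    field_simp
    ring
  have hApos : 0 < (1 - qs) * c + qs * (c * c) := by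
    rw [hA]; positivity
  have hBpos : 0 < (1 - qs) * c + qs := by
    rw [hB]; positivity
  -- derivatives
  have hdA : HasDerivAt (fun q : ℝ => (1 - q) * c + q * (c * c)) (c * c - c) qs := by
    have h1 : HasDerivAt (fun q : ℝ => (1 - q) * c) (-1 * c) qs :=
      ((hasDerivAt_id qs).const_sub 1).mul_const c
    have h2 : HasDerivAt (fun q : ℝ => q * (c * c)) (1 * (c * c)) qs :=
      (hasDerivAt_id qs).mul_const (c * c)
    have := h1.add h2
    exact this.congr_deriv (by ring)
  have hdB : HasDerivAt (fun q : ℝ => (1 - q) * c + q) (1 - c) qs := by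
    have h1 : HasDerivAt (fun q : ℝ => (1 - q) * c) (-1 * c) qs :=
      ((hasDerivAt_id qs).const_sub 1).mul_const c
    have := h1.add (hasDerivAt_id qs)
    exact this.congr_deriv (by ring)
  have hdA' := hdA.rpow_const (p := -s) (Or.inl hApos.ne')
  have hdB' := hdB.rpow_const (p := -s) (Or.inl hBpos.ne')
  have hd := (hdA'.const_mul (1 - p)).add (hdB'.const_mul p)
  have hkey : (1 - p) * c * (((1 - qs) * c + qs * (c * c)) ^ (-s - 1))
      = p * (((1 - qs) * c + qs) ^ (-s - 1)) := by
    rw [hA, hB]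
    rw [mul_rpow hc0.le (by positivity), mul_rpow hDp2.le hK.le,
        mul_rpow hDp1.le hK.le,
        mul_rpow (by positivity : (0:ℝ) ≤ (2:ℝ) ^ (s * t / (s + 1))) (by positivity : (0:ℝ) ≤ p ^ σ)]
    have h2nn : (0:ℝ) ≤ 2 := by norm_num
    rw [hcdef]
    simp only [← Real.rpow_mul h2nn, ← Real.rpow_mul hq0.le, ← Real.rpow_mul hp0.le, hσdef]
    have e1 : 1 / (s + 1) * (-s - 1) = -1 := by field_simp; ring
    have e2 : s * t / (s + 1) * (-s - 1) = -(s * t) := by field_simp; ring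
    rw [e1, e2, Real.rpow_neg_one, Real.rpow_neg_one]
    have h2m : (2:ℝ) ^ t * (2:ℝ) ^ (t * (-s - 1)) = (2:ℝ) ^ (-(s * t)) := by
      rw [← Real.rpow_add two_pos]; congr 1; ring
    linear_combination ((1 - p) * (1 - p)⁻¹ * K ^ (-s - 1)) * h2m +
      ((2:ℝ) ^ (-(s * t)) * K ^ (-s - 1)) * mul_inv_cancel₀ hq0.ne' -
      ((2:ℝ) ^ (-(s * t)) * K ^ (-s - 1)) * mul_inv_cancel₀ hp0.ne'
  rw [h2t]
  have hd' : HasDerivAt (fun q₁ => (1 - p) * ((1 - q₁) * c + q₁ * (c * c)) ^ (-s) + p * ((1 - q₁) * c + q₁) ^ (-s)) _ qs := hd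
  rw [hd'.deriv]
  linear_combination (s * (1 - c)) * hkey
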